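/- Let 0 < ε ≤ 10⁻⁸ and X large. If every nontrivial zero ρ = β + iγ of the Riemann zeta function with β ≥ 1 - 2·10⁻⁷ and |γ| ≤ X^{1.1} satisfies N(β, X^{1.1}) ≪ X^{0.1(1-β)/2} and β ≤ 1 - (log X)^{-0.667}, then for every integer n ∈ [X^{0.1}, 2X], the quantity |Σ_ρ n^{ρ-1}| over zeros ρ = β+iγ with β ≥ 1-10ε and |γ| ≤ X^{1.1} is O(exp(-(log X)^{0.33})). -/

import Mathlib

set_option maxHeartbeats 1000000 in
open Complex in
/-- Given the Vinogradov–Korobov zero-free region and a zero-density estimate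
near the 1-line, for `n ∈ [X^{0.1}, 2X]` the sum `Σ_ρ n^{ρ-1}` over nontrivial
zeta zeros `ρ = β + iγ` with `β ≥ 1 - 10ε`, `|γ| ≤ X^{1.1}` is
`O(exp(-(log X)^{0.33}))`. -/
theorem stmt_16 :
    ∀ C' : ℝ, 0 < C' → ∃ C X₀ : ℝ, 0 < C ∧ ∀ ε X : ℝ, 0 < ε → ε ≤ 10 ^ (-8 : ℤ) →
      X₀ ≤ X → ∀ Z : Finset ℂ,
      -- `Z` is exactly the set of nontrivial zeros in the region
      (∀ ρ : ℂ, ρ ∈ Z ↔ riemannZeta ρ = 0 ∧ 0 < ρ.re ∧ ρ.re < 1 ∧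
          1 - 10 * ε ≤ ρ.re ∧ |ρ.im| ≤ X ^ (1.1 : ℝ)) →
      -- zero-density estimate `N(β, X^{1.1}) ≪ X^{0.1(1-β)/2}` near the 1-line
      (∀ β : ℝ, 1 - 2 * 10 ^ (-7 : ℤ) ≤ β →
          ((Z.filter (fun ρ => β ≤ ρ.re)).card : ℝ) ≤ C' * X ^ (0.1 * (1 - β) / 2)) →
      -- Vinogradov–Korobov zero-free region
      (∀ ρ ∈ Z, ρ.re ≤ 1 - (Real.log X) ^ (-(0.667 : ℝ))) →
      ∀ n : ℕ, X ^ (0.1 : ℝ) ≤ (n : ℝ) → (n : ℝ) ≤ 2 * X →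
        ‖∑ ρ ∈ Z, (n : ℂ) ^ (ρ - 1)‖
          ≤ C * Real.exp (-(Real.log X) ^ (0.33 : ℝ)) := by
  intro C' hC'
  refine ⟨8 * C', Real.exp (Real.exp 3000), by linarith, ?_⟩
  intro ε X hε hε8 hX Z hZ hdens hzfr n hn1 hn2
  have hX0 : 0 < X := lt_of_lt_of_le (Real.exp_pos _) hX
  set L := Real.log X with hLdef
  have hL3000 : Real.exp 3000 ≤ L := (Real.le_log_iff_exp_le hX0).mpr hX
  have hLbig : (3001:ℝ) ≤ L := le_trans (by linarith [Real.add_one_le_exp (3000:ℝ)]) hL3000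
  have hL1 : (1:ℝ) ≤ L := by linarith
  have hL0 : (0:ℝ) < L := by linarith
  have hn0 : 0 < (n:ℝ) := lt_of_lt_of_le (Real.rpow_pos_of_pos hX0 _) hn1
  have hlogn : 0.1 * L ≤ Real.log n := by
    have h := Real.log_le_log (Real.rpow_pos_of_pos hX0 (0.1:ℝ)) hn1
    rwa [Real.log_rpow hX0] at h
  have hεsmall : 10 * ε ≤ 2 * 10 ^ (-7:ℤ) := by
    have h8 : (10:ℝ) ^ (-8:ℤ) = 1/100000000 := by norm_num
    have h7 : (10:ℝ) ^ (-7:ℤ) = 1/10000000 := by norm_num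
    rw [h7]; rw [h8] at hε8; linarith
  have h1pow : (1:ℝ) ≤ L ^ (0.33:ℝ) := by
    calc (1:ℝ) = (1:ℝ) ^ (0.33:ℝ) := (Real.one_rpow _).symm
      _ ≤ L ^ (0.33:ℝ) := Real.rpow_le_rpow zero_le_one hL1 (by norm_num)
  -- counting lemma
  have hcount : ∀ k : ℕ,
      ((Z.filter fun ρ => ⌈(1 - ρ.re) * L⌉₊ = k).card : ℝ) ≤ C' * Real.exp (0.05 * k) := by
    intro k
    set β : ℝ := max (1 - (k:ℝ) / L) (1 - 2 * 10 ^ (-7:ℤ)) with hβ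
    have hsub : (Z.filter fun ρ => ⌈(1 - ρ.re) * L⌉₊ = k) ⊆ Z.filter fun ρ => β ≤ ρ.re := by
      intro ρ hρ
      rw [Finset.mem_filter] at hρ ⊢
      obtain ⟨hρZ, hKk⟩ := hρ
      obtain ⟨-, -, -, hge, -⟩ := (hZ ρ).mp hρZ
      refine ⟨hρZ, max_le ?_ (le_trans (by linarith) hge)⟩
      have h1 : (1 - ρ.re) * L ≤ (k:ℝ) := by
        calc (1 - ρ.re) * L ≤ (⌈(1 - ρ.re) * L⌉₊ : ℝ) := Nat.le_ceil _
          _ = (k:ℝ) := by exact_mod_cast congrArg Nat.cast hKk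
      have h2 : 1 - ρ.re ≤ (k:ℝ) / L := by
        rw [le_div_iff₀ hL0]; exact h1
      linarith
    have h2 := hdens β (le_max_right _ _)
    calc ((Z.filter fun ρ => ⌈(1 - ρ.re) * L⌉₊ = k).card : ℝ)
        ≤ ((Z.filter fun ρ => β ≤ ρ.re).card : ℝ) := by
          exact_mod_cast Finset.card_le_card hsub
      _ ≤ C' * X ^ (0.1 * (1 - β) / 2) := h2
      _ ≤ C' * Real.exp (0.05 * k) := by
          apply mul_le_mul_of_nonneg_left _ hC'.le
          rw [Real.rpow_def_of_pos hX0]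
          apply Real.exp_le_exp.mpr
          have hβ1 : 1 - β ≤ (k:ℝ) / L := by
            have := le_max_left (1 - (k:ℝ) / L) (1 - 2 * 10 ^ (-7:ℤ))
            rw [← hβ] at this; linarith
          have h3 : (1 - β) * L ≤ (k:ℝ) := by
            calc (1 - β) * L ≤ ((k:ℝ) / L) * L := mul_le_mul_of_nonneg_right hβ1 hL0.le
              _ = (k:ℝ) := div_mul_cancel₀ _ hL0.ne'
          nlinarith
  -- per-term bound
  have hterm : ∀ ρ ∈ Z, ‖(n:ℂ) ^ (ρ - 1)‖
      ≤ Real.exp (0.05 - 0.05 * L ^ (0.333:ℝ)) *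
        Real.exp (-(0.05) * (⌈(1 - ρ.re) * L⌉₊ : ℝ)) := by
    intro ρ hρ
    obtain ⟨-, hpos, hlt1, hge, -⟩ := (hZ ρ).mp hρ
    rw [show ((n:ℕ):ℂ) = (((n:ℝ)):ℂ) by norm_num,
      Complex.norm_cpow_eq_rpow_re_of_pos hn0, Real.rpow_def_of_pos hn0, ← Real.exp_add]
    apply Real.exp_le_exp.mpr
    have hre : (ρ - 1).re = ρ.re - 1 := by simp
    rw [hre]
    have hu0 : 0 ≤ (1 - ρ.re) * L := mul_nonneg (by linarith) hL0.le
    have hum : L ^ (0.333:ℝ) ≤ (1 - ρ.re) * L := by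
      have hz := hzfr ρ hρ
      have h1 : L ^ (-(0.667:ℝ)) ≤ 1 - ρ.re := by linarith
      calc L ^ (0.333:ℝ) = L ^ (-(0.667:ℝ)) * L := by
            rw [show L ^ (0.333:ℝ) = L ^ ((-(0.667:ℝ)) + 1) from by norm_num,
              Real.rpow_add hL0, Real.rpow_one]
        _ ≤ (1 - ρ.re) * L := mul_le_mul_of_nonneg_right h1 hL0.le
    have hK : (⌈(1 - ρ.re) * L⌉₊ : ℝ) ≤ (1 - ρ.re) * L + 1 := le_of_lt (Nat.ceil_lt_add_one hu0)
    have h3 : Real.log n * (ρ.re - 1) ≤ (0.1 * L) * (ρ.re - 1) :=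
      mul_le_mul_of_nonpos_right hlogn (by linarith)
    have heq : (0.1 * L) * (ρ.re - 1) = -(0.1) * ((1 - ρ.re) * L) := by ring
    linarith
  -- sum of the exponential weights
  set M := ⌈L⌉₊ + 1 with hM
  have hmaps : ∀ ρ ∈ Z, ⌈(1 - ρ.re) * L⌉₊ ∈ Finset.range M := by
    intro ρ hρ
    obtain ⟨-, hpos, hlt1, -, -⟩ := (hZ ρ).mp hρ
    rw [Finset.mem_range, hM]
    have h1 : (1 - ρ.re) * L ≤ L := by nlinarith
    exact Nat.lt_succ_of_le (Nat.ceil_le_ceil h1)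
  have hfib := Finset.sum_fiberwise_of_maps_to hmaps
    (fun ρ => Real.exp (-(0.05) * (⌈(1 - ρ.re) * L⌉₊ : ℝ)))
  have hS : ∑ ρ ∈ Z, Real.exp (-(0.05) * (⌈(1 - ρ.re) * L⌉₊ : ℝ)) ≤ (M:ℝ) * C' := by
    rw [← hfib]
    calc ∑ k ∈ Finset.range M, ∑ ρ ∈ Z.filter (fun ρ => ⌈(1 - ρ.re) * L⌉₊ = k),
            Real.exp (-(0.05) * (⌈(1 - ρ.re) * L⌉₊ : ℝ))
        ≤ ∑ _k ∈ Finset.range M, C' := by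
          apply Finset.sum_le_sum
          intro k _
          have heq : ∀ ρ ∈ Z.filter (fun ρ => ⌈(1 - ρ.re) * L⌉₊ = k),
              Real.exp (-(0.05) * (⌈(1 - ρ.re) * L⌉₊ : ℝ)) = Real.exp (-(0.05) * (k:ℝ)) := by
            intro ρ hρ
            rw [(Finset.mem_filter.mp hρ).2]
          rw [Finset.sum_congr rfl heq, Finset.sum_const, nsmul_eq_mul]
          calc ((Z.filter (fun ρ => ⌈(1 - ρ.re) * L⌉₊ = k)).card : ℝ) * Real.exp (-(0.05) * (k:ℝ))
              ≤ (C' * Real.exp (0.05 * k)) * Real.exp (-(0.05) * (k:ℝ)) :=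
                mul_le_mul_of_nonneg_right (hcount k) (Real.exp_pos _).le
            _ = C' := by rw [mul_assoc, ← Real.exp_add]; norm_num
      _ = (M:ℝ) * C' := by rw [Finset.sum_const, Finset.card_range, nsmul_eq_mul]
  have hM2L : (M:ℝ) ≤ 2 * L := by
    have h1 : (⌈L⌉₊:ℝ) < L + 1 := Nat.ceil_lt_add_one hL0.le
    have h2 : (M:ℝ) = (⌈L⌉₊:ℝ) + 1 := by rw [hM]; push_cast; ring
    linarith
  -- numeric comparison
  have h003 : (400:ℝ) ≤ L ^ (0.003:ℝ) := by
    have h1 : (Real.exp 3000) ^ (0.003:ℝ) ≤ L ^ (0.003:ℝ) :=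
      Real.rpow_le_rpow (Real.exp_pos _).le hL3000 (by norm_num)
    have h2 : (Real.exp 3000) ^ (0.003:ℝ) = Real.exp 9 := by
      rw [Real.rpow_def_of_pos (Real.exp_pos _), Real.log_exp]; norm_num
    have e2 : (2:ℝ) ≤ Real.exp 1 := by linarith [Real.add_one_le_exp (1:ℝ)]
    have h4 : Real.exp 9 = (Real.exp 1) ^ (9:ℕ) := by
      rw [← Real.exp_nat_mul]; norm_num
    have h3 : (400:ℝ) ≤ Real.exp 9 := by
      rw [h4]
      calc (400:ℝ) ≤ 2 ^ (9:ℕ) := by norm_num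
        _ ≤ (Real.exp 1) ^ (9:ℕ) := pow_le_pow_left₀ (by norm_num) e2 9
    linarith [h2 ▸ h1]
  have hm : L ^ (0.333:ℝ) = L ^ (0.33:ℝ) * L ^ (0.003:ℝ) := by
    rw [← Real.rpow_add hL0]; norm_num
  have hpow : 20 * L ^ (0.33:ℝ) ≤ 0.05 * L ^ (0.333:ℝ) := by
    rw [hm]; nlinarith
  have hlogL : Real.log L ≤ 4 * L ^ (0.33:ℝ) := by
    have h1 := Real.log_le_sub_one_of_pos (Real.rpow_pos_of_pos hL0 (0.33:ℝ))
    rw [Real.log_rpow hL0] at h1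
    linarith
  have hLle : L ≤ Real.exp (0.05 * L ^ (0.333:ℝ) - L ^ (0.33:ℝ) - 1) := by
    conv_lhs => rw [← Real.exp_log hL0]
    exact Real.exp_le_exp.mpr (by linarith)
  have hkey : Real.exp (0.05 - 0.05 * L ^ (0.333:ℝ)) * ((M:ℝ) * C')
      ≤ 8 * C' * Real.exp (-(L ^ (0.33:ℝ))) := by
    have hMexp : (M:ℝ) ≤ 2 * Real.exp (0.05 * L ^ (0.333:ℝ) - L ^ (0.33:ℝ) - 1) := by
      linarith
    calc Real.exp (0.05 - 0.05 * L ^ (0.333:ℝ)) * ((M:ℝ) * C')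
        ≤ Real.exp (0.05 - 0.05 * L ^ (0.333:ℝ)) *
            ((2 * Real.exp (0.05 * L ^ (0.333:ℝ) - L ^ (0.33:ℝ) - 1)) * C') := by
          apply mul_le_mul_of_nonneg_left _ (Real.exp_pos _).le
          exact mul_le_mul_of_nonneg_right hMexp hC'.le
      _ = 2 * Real.exp ((0.05 - 0.05 * L ^ (0.333:ℝ)) +
            (0.05 * L ^ (0.333:ℝ) - L ^ (0.33:ℝ) - 1)) * C' := by
          rw [Real.exp_add]; ring
      _ ≤ 8 * C' * Real.exp (-(L ^ (0.33:ℝ))) := by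
          have hle : (0.05 - 0.05 * L ^ (0.333:ℝ)) +
              (0.05 * L ^ (0.333:ℝ) - L ^ (0.33:ℝ) - 1) ≤ -(L ^ (0.33:ℝ)) := by linarith
          have h := Real.exp_le_exp.mpr hle
          nlinarith [hC'.le, (Real.exp_pos (-(L ^ (0.33:ℝ)))).le]
  calc ‖∑ ρ ∈ Z, (n:ℂ) ^ (ρ - 1)‖
      ≤ ∑ ρ ∈ Z, ‖(n:ℂ) ^ (ρ - 1)‖ := norm_sum_le _ _
    _ ≤ ∑ ρ ∈ Z, Real.exp (0.05 - 0.05 * L ^ (0.333:ℝ)) *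
          Real.exp (-(0.05) * (⌈(1 - ρ.re) * L⌉₊ : ℝ)) := Finset.sum_le_sum hterm
    _ = Real.exp (0.05 - 0.05 * L ^ (0.333:ℝ)) *
          ∑ ρ ∈ Z, Real.exp (-(0.05) * (⌈(1 - ρ.re) * L⌉₊ : ℝ)) := by
        rw [← Finset.mul_sum]
    _ ≤ Real.exp (0.05 - 0.05 * L ^ (0.333:ℝ)) * ((M:ℝ) * C') :=
        mul_le_mul_of_nonneg_left hS (Real.exp_pos _).le
    _ ≤ 8 * C' * Real.exp (-(L ^ (0.33:ℝ))) := hkey
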